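/- arXiv:1606.05779 — 2 statements merged into one kernel-verified Lean document; each statement's English description precedes it below -/
import Mathlib

section
/- Let S₀, S₁ ≤ N be real numbers ≥ 1 and d₀, d₁ positive integers. Define A(S₀,S₁,d₀,d₁) as the set of integers s = s₀·s₁ with gcd(s₀,s₁)=1, s₀ squarefull with S₀ < s₀ ≤ 2S₀ and d₀ ∣ s₀, and s₁ squarefree with S₁ < s₁ ≤ 2S₁ and d₁ ∣ s₁. Then #A(S₀,S₁,d₀,d₁) ≪ N^η · S₀^{1/2} · S₁ · d₀^{-1/2} · d₁^{-1}, where the implied constant depends only on η > 0. -/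
open Finset
open scoped Classical

/-- An integer is squarefull if every prime dividing it has its square dividing it. -/
def Squarefull (n : ℕ) : Prop := ∀ p : ℕ, p.Prime → p ∣ n → p ^ 2 ∣ n


lemma sqrt2_ge : (4:ℝ)/3 ≤ Real.sqrt 2 := by
  nlinarith [Real.sq_sqrt (by norm_num : (0:ℝ) ≤ 2), Real.sqrt_nonneg 2]

lemma geom4 {r : ℝ} (h0 : 0 ≤ r) (h1 : r ≤ 3/4) (n : ℕ) :
    ∑ i ∈ Finset.range n, r ^ i ≤ 4 := by
  calc ∑ i ∈ Finset.range n, r ^ i ≤ ∑ i ∈ Finset.range n, (3/4:ℝ) ^ i := by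
        exact Finset.sum_le_sum fun i _ => pow_le_pow_left₀ h0 h1 i
    _ ≤ 4 := by
        rw [geom_sum_eq (by norm_num) n]
        have : (0:ℝ) ≤ (3/4:ℝ)^n := by positivity
        have h2 : ((3/4:ℝ)^n - 1) / (3/4 - 1) = (1 - (3/4:ℝ)^n) * 4 := by ring
        rw [h2]; nlinarith

lemma sqrt_prod {ι : Type*} (s : Finset ι) (f : ι → ℝ) (h : ∀ i ∈ s, 0 ≤ f i) :
    Real.sqrt (∏ i ∈ s, f i) = ∏ i ∈ s, Real.sqrt (f i) := by
  induction s using Finset.induction with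
  | empty => simp
  | insert _ _ ha ih =>
    rename_i a s
    rw [Finset.prod_insert ha, Finset.prod_insert ha,
      Real.sqrt_mul (h a (Finset.mem_insert_self a s)),
      ih (fun i hi => h i (Finset.mem_insert_of_mem hi))]

lemma sqrt_pow {x : ℝ} (hx : 0 ≤ x) (n : ℕ) : Real.sqrt (x ^ n) = (Real.sqrt x) ^ n := by
  induction n with
  | zero => simp
  | succ n ih => rw [pow_succ, pow_succ, Real.sqrt_mul (by positivity), ih]

lemma tele_pt {a : ℕ} (ha : 2 ≤ a) :
    ((a:ℝ) * Real.sqrt a)⁻¹ ≤ 2 * ((Real.sqrt ((a:ℝ) - 1))⁻¹ - (Real.sqrt a)⁻¹) := by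
  set x : ℝ := (a:ℝ) with hx
  have hx2 : (2:ℝ) ≤ x := by rw [hx]; exact_mod_cast ha
  set s := Real.sqrt (x - 1) with hs
  set t := Real.sqrt x with ht
  have hs0 : 0 < s := Real.sqrt_pos.mpr (by linarith)
  have ht0 : 0 < t := Real.sqrt_pos.mpr (by linarith)
  have hs2 : s ^ 2 = x - 1 := Real.sq_sqrt (by linarith)
  have ht2 : t ^ 2 = x := Real.sq_sqrt (by linarith)
  have hst : s ≤ t := Real.sqrt_le_sqrt (by linarith)
  have key : (t - s) * (t + s) = 1 := by nlinarith
  have h1 : s⁻¹ - t⁻¹ = (t - s) / (s * t) := by field_simp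
  rw [h1]
  rw [inv_le_iff_one_le_mul₀ (by positivity)]
  have hts : t - s = 1 / (t + s) := by
    field_simp
    nlinarith
  rw [hts, ← sub_nonneg]
  have expand : 2 * (1 / (t + s) / (s * t)) * (x * t) - 1
      = (2 * x - s * (t + s)) / ((t + s) * s) := by
    field_simp
  rw [expand]
  apply div_nonneg _ (by positivity)
  nlinarith

lemma sum_inv_mul_sqrt_le (Y : ℕ) :
    ∑ a ∈ Icc 1 Y, ((a:ℝ) * Real.sqrt a)⁻¹ ≤ 3 := by
  rcases Nat.lt_or_ge Y 1 with hY | hY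
  · interval_cases Y <;> simp
  · have hsplit : Icc 1 Y = insert 1 (Icc 2 Y) := by
      ext a; simp [Finset.mem_Icc, Finset.mem_insert]; omega
    rw [hsplit, Finset.sum_insert (by simp)]
    have h1 : ((1:ℕ):ℝ) * Real.sqrt ((1:ℕ):ℝ) = 1 := by simp
    rw [h1, inv_one]
    have htail : ∑ a ∈ Icc 2 Y, ((a:ℝ) * Real.sqrt a)⁻¹ ≤ 2 := by
      have hb : ∑ a ∈ Icc 2 Y, ((a:ℝ) * Real.sqrt a)⁻¹
          ≤ ∑ a ∈ Icc 2 Y, 2 * ((Real.sqrt ((a:ℝ) - 1))⁻¹ - (Real.sqrt (a:ℝ))⁻¹) := by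
        apply Finset.sum_le_sum
        intro a ha
        exact tele_pt (Finset.mem_Icc.mp ha).1
      refine hb.trans ?_
      have hIcc : Icc 2 Y = Ico 2 (Y+1) := by rw [Finset.Ico_add_one_right_eq_Icc]
      rw [hIcc, Finset.sum_Ico_eq_sum_range]
      have hre : ∀ i : ℕ, 2 * ((Real.sqrt (((2 + i:ℕ):ℝ) - 1))⁻¹ - (Real.sqrt ((2+i:ℕ):ℝ))⁻¹)
          = (fun j => 2 * (Real.sqrt ((j+1:ℕ):ℝ))⁻¹) i - (fun j => 2 * (Real.sqrt ((j+1:ℕ):ℝ))⁻¹) (i+1) := by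
        intro i
        push_cast
        ring_nf
      rw [Finset.sum_congr rfl (fun i _ => hre i), Finset.sum_range_sub']
      have : (0:ℝ) ≤ 2 * (Real.sqrt ((Y + 1 - 2 + 1:ℕ):ℝ))⁻¹ := by positivity
      have h2 : 2 * (Real.sqrt ((0+1:ℕ):ℝ))⁻¹ = 2 := by norm_num
      rw [h2]
      linarith
    linarith

lemma sf_decomp {n : ℕ} (hn : 0 < n) (h : Squarefull n) :
    ∃ a k : ℕ, 0 < a ∧ 0 < k ∧ a ∣ k ∧ k ^ 2 * a = n := by
  obtain ⟨a, k, hak, hsf⟩ := Nat.sq_mul_squarefree n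
  have ha0 : 0 < a := Nat.pos_of_ne_zero (by rintro rfl; simp at hak; omega)
  have hk0 : 0 < k := Nat.pos_of_ne_zero (by rintro rfl; simp at hak; omega)
  refine ⟨a, k, ha0, hk0, ?_, hak⟩
  -- every prime of a divides k
  have hpk : ∀ p ∈ a.primeFactors, p ∣ k := by
    intro p hp
    have hpp : p.Prime := Nat.prime_of_mem_primeFactors hp
    have hpa : p ∣ a := Nat.dvd_of_mem_primeFactors hp
    have hpn : p ∣ n := hpa.trans ⟨k ^ 2, by rw [← hak]; ring⟩
    have hp2 : p ^ 2 ∣ n := h p hpp hpn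
    by_contra hnk
    have hcop : Nat.Coprime (p ^ 2) (k ^ 2) :=
      ((Nat.Prime.coprime_iff_not_dvd hpp).mpr hnk).pow 2 2
    have hda : p ^ 2 ∣ a := by
      rw [← hak] at hp2
      exact hcop.dvd_of_dvd_mul_left hp2
    have hu := hsf p (by rw [← pow_two]; exact hda)
    exact hpp.one_lt.ne' (Nat.isUnit_iff.mp hu)
  have := Finset.prod_primes_dvd k
    (fun p hp => (Nat.prime_of_mem_primeFactors hp).prime) hpk
  rwa [Nat.prod_primeFactors_of_squarefree hsf] at this

lemma sf_count (Y : ℕ) :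
    ((((Icc 1 Y).filter Squarefull).card : ℝ)) ≤ 3 * Real.sqrt Y := by
  classical
  set Q : Finset (ℕ × ℕ) :=
    (Icc 1 Y ×ˢ Icc 1 Y).filter (fun q => q.1 ∣ q.2 ∧ q.2 ^ 2 * q.1 ≤ Y) with hQ
  -- step 1: card ≤ card Q
  have hcard : ((Icc 1 Y).filter Squarefull).card ≤ Q.card := by
    have hex : ∀ n : ℕ, ∃ q : ℕ × ℕ,
        n ∈ (Icc 1 Y).filter Squarefull → q ∈ Q ∧ n = q.2 ^ 2 * q.1 := by
      intro n
      by_cases hn : n ∈ (Icc 1 Y).filter Squarefull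
      · obtain ⟨hmem, hsf⟩ := Finset.mem_filter.mp hn
        obtain ⟨h1, h2⟩ := Finset.mem_Icc.mp hmem
        obtain ⟨a, k, ha0, hk0, hak, heq⟩ := sf_decomp (by omega) hsf
        refine ⟨(a, k), fun _ => ⟨?_, heq.symm⟩⟩
        rw [hQ, Finset.mem_filter, Finset.mem_product]
        have han : a ≤ n := Nat.le_of_dvd (by omega) ⟨k ^ 2, by rw [← heq]; ring⟩
        have hkn : k ≤ n := by nlinarith
        exact ⟨⟨Finset.mem_Icc.mpr ⟨ha0, by omega⟩, Finset.mem_Icc.mpr ⟨hk0, by omega⟩⟩,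
          hak, by rw [heq]; omega⟩
      · exact ⟨(1,1), fun h => absurd h hn⟩
    choose g hg using hex
    apply Finset.card_le_card_of_injOn g (fun n hn => (hg n hn).1)
    intro n₁ h₁ n₂ h₂ hgeq
    rw [(hg n₁ h₁).2, (hg n₂ h₂).2, hgeq]
  -- step 2: card Q via fibers over first coordinate
  have hfib : Q.card = ∑ a ∈ Icc 1 Y, (Q.filter (fun q => q.1 = a)).card := by
    apply Finset.card_eq_sum_card_fiberwise
    intro q hq
    rw [hQ, Finset.mem_coe, Finset.mem_filter, Finset.mem_product] at hq
    exact hq.1.1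
  have hinner : ∀ a ∈ Icc 1 Y,
      ((Q.filter (fun q => q.1 = a)).card : ℝ) ≤ Real.sqrt Y * ((a:ℝ) * Real.sqrt a)⁻¹ := by
    intro a ha
    have ha1 : 1 ≤ a := (Finset.mem_Icc.mp ha).1
    have hsub : (Q.filter (fun q => q.1 = a)).card
        ≤ ((Ioc 0 (Nat.sqrt (Y / a))).filter (fun k => a ∣ k)).card := by
      apply Finset.card_le_card_of_injOn (fun q => q.2)
      · intro q hq
        rw [Finset.mem_coe, Finset.mem_filter] at hq
        obtain ⟨hq1, hq2⟩ := hq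
        rw [hQ, Finset.mem_filter, Finset.mem_product] at hq1
        obtain ⟨⟨hmem1, hmem2⟩, hdvd, hle⟩ := hq1
        rw [Finset.mem_coe, Finset.mem_filter, Finset.mem_Ioc]
        subst hq2
        have hk1 : 1 ≤ q.2 := (Finset.mem_Icc.mp hmem2).1
        constructor
        · refine ⟨hk1, Nat.le_sqrt.mpr ?_⟩
          rw [Nat.le_div_iff_mul_le (by omega)]
          calc q.2 * q.2 * q.1 = q.2 ^ 2 * q.1 := by ring
            _ ≤ Y := hle
        · exact hdvd
      · intro q₁ h₁ q₂ h₂ heq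
        rw [Finset.mem_coe, Finset.mem_filter] at h₁ h₂
        exact Prod.ext (h₁.2.trans h₂.2.symm) heq
    have hdivcard : ((Ioc 0 (Nat.sqrt (Y / a))).filter (fun k => a ∣ k)).card
        = Nat.sqrt (Y / a) / a := by
      simpa using Nat.Ioc_filter_dvd_card_eq_div (Nat.sqrt (Y / a)) a
    have : ((Q.filter (fun q => q.1 = a)).card : ℝ) ≤ ((Nat.sqrt (Y / a) / a : ℕ) : ℝ) := by
      exact_mod_cast hsub.trans_eq hdivcard
    refine this.trans ?_
    calc ((Nat.sqrt (Y / a) / a : ℕ) : ℝ) ≤ ((Nat.sqrt (Y / a) : ℕ) : ℝ) / (a:ℝ) :=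
          Nat.cast_div_le
      _ ≤ Real.sqrt ((Y:ℝ) / (a:ℝ)) / (a:ℝ) := by
          apply div_le_div_of_nonneg_right ?_ (by positivity)
          exact (Real.nat_sqrt_le_real_sqrt).trans (Real.sqrt_le_sqrt Nat.cast_div_le)
      _ = Real.sqrt Y * ((a:ℝ) * Real.sqrt a)⁻¹ := by
          rw [Real.sqrt_div (by positivity) (a:ℝ)]
          rw [div_div, div_eq_mul_inv, mul_comm (Real.sqrt (a:ℝ)) ((a:ℝ))]
  calc (((Icc 1 Y).filter Squarefull).card : ℝ) ≤ (Q.card : ℝ) := by exact_mod_cast hcard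
    _ = ∑ a ∈ Icc 1 Y, ((Q.filter (fun q => q.1 = a)).card : ℝ) := by
        rw [hfib]; push_cast; rfl
    _ ≤ ∑ a ∈ Icc 1 Y, Real.sqrt Y * ((a:ℝ) * Real.sqrt a)⁻¹ := Finset.sum_le_sum hinner
    _ = Real.sqrt Y * ∑ a ∈ Icc 1 Y, ((a:ℝ) * Real.sqrt a)⁻¹ := by rw [Finset.mul_sum]
    _ ≤ Real.sqrt Y * 3 := by
        have := sum_inv_mul_sqrt_le Y
        have h0 : (0:ℝ) ≤ Real.sqrt Y := Real.sqrt_nonneg _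
        nlinarith [Finset.sum_nonneg (fun (a:ℕ) (_ : a ∈ Icc 1 Y) => inv_nonneg.mpr (by positivity : (0:ℝ) ≤ (a:ℝ) * Real.sqrt a))]
    _ = 3 * Real.sqrt Y := by ring
lemma smooth_sum (X d₀ : ℕ) (hd : 0 < d₀) :
    ∑ u ∈ (Icc 1 X).filter (· ∣ d₀ ^ X), ((Real.sqrt u)⁻¹ : ℝ)
      ≤ 4 ^ d₀.primeFactors.card := by
  classical
  set P := d₀.primeFactors with hP
  set U := (Icc 1 X).filter (· ∣ d₀ ^ X) with hU
  have hrep : ∀ u ∈ U, u = ∏ p ∈ P, p ^ u.factorization p := by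
    intro u hu
    rw [hU, Finset.mem_filter, Finset.mem_Icc] at hu
    obtain ⟨⟨hu1, huX⟩, hudvd⟩ := hu
    have hu0 : u ≠ 0 := by omega
    have hsupp : u.primeFactors ⊆ P := by
      intro p hp
      have hpp := Nat.prime_of_mem_primeFactors hp
      have : p ∣ d₀ ^ X := (Nat.dvd_of_mem_primeFactors hp).trans hudvd
      exact Nat.mem_primeFactors.mpr ⟨hpp, hpp.dvd_of_dvd_pow this, by omega⟩
    have base : ∏ p ∈ u.primeFactors, p ^ u.factorization p = u := by
      rw [← Nat.support_factorization]
      exact Nat.factorization_prod_pow_eq_self hu0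
    rw [← Finset.prod_subset hsupp (fun p _ hpn => by
      rw [Finsupp.notMem_support_iff.mp (by rwa [Nat.support_factorization]), pow_zero])]
    exact base.symm
  have hterm : ∀ u ∈ U, ((Real.sqrt u)⁻¹ : ℝ)
      = ∏ x ∈ P.attach, ((Real.sqrt x.1)⁻¹) ^ (u.factorization x.1) := by
    intro u hu
    have hcast : (u : ℝ) = ∏ p ∈ P, ((p:ℝ)) ^ u.factorization p := by
      conv_lhs => rw [hrep u hu]
      push_cast
      rfl
    rw [hcast, sqrt_prod _ _ (fun p _ => by positivity)]
    rw [← Finset.prod_inv_distrib]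
    rw [← Finset.prod_attach P (fun p => (Real.sqrt (((p:ℕ):ℝ) ^ u.factorization p))⁻¹)]
    apply Finset.prod_congr rfl
    intro x _
    rw [sqrt_pow (by positivity), inv_pow]
  -- injection into pi
  set Φ := P.pi (fun _ => Finset.range (X + 1)) with hΦ
  set g : (∀ a, a ∈ P → ℕ) → ℝ :=
    fun φ => ∏ x ∈ P.attach, ((Real.sqrt x.1)⁻¹) ^ (if h : x.1 ∈ P then φ x.1 h else 0) with hg
  set i : ℕ → (∀ a, a ∈ P → ℕ) := fun u => fun p _ => u.factorization p with hi
  have hsum1 : ∑ u ∈ U, ((Real.sqrt u)⁻¹ : ℝ) = ∑ φ ∈ U.image i, g φ := by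
    rw [Finset.sum_image (by
      intro x hx y hy hxy
      rw [hrep x hx, hrep y hy]
      apply Finset.prod_congr rfl
      intro p hp
      rw [show x.factorization p = y.factorization p from congrFun (congrFun hxy p) hp])]
    apply Finset.sum_congr rfl
    intro u hu
    rw [hterm u hu, hg]
    apply Finset.prod_congr rfl
    intro x _
    rw [dif_pos x.2]
  have hsub : U.image i ⊆ Φ := by
    intro φ hφ
    obtain ⟨u, hu, rfl⟩ := Finset.mem_image.mp hφ
    rw [hΦ, Finset.mem_pi]
    intro p hp
    rw [hU, Finset.mem_filter, Finset.mem_Icc] at hu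
    have hu0 : u ≠ 0 := by omega
    refine Finset.mem_range.mpr ?_
    have hrf : i u p hp = u.factorization p := rfl
    rw [hrf]
    have := Nat.factorization_lt (n := u) p hu0
    omega
  have hsum2 : ∑ φ ∈ U.image i, g φ ≤ ∑ φ ∈ Φ, g φ := by
    apply Finset.sum_le_sum_of_subset_of_nonneg hsub
    intro φ _ _
    apply Finset.prod_nonneg
    intro x _
    positivity
  have hsum3 : ∑ φ ∈ Φ, g φ = ∏ p ∈ P, ∑ e ∈ Finset.range (X+1), ((Real.sqrt p)⁻¹) ^ e := by
    rw [Finset.prod_sum]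
    apply Finset.sum_congr rfl
    intro φ hφ
    apply Finset.prod_congr rfl
    intro x _
    rw [dif_pos x.2]
  have hfac : ∀ p ∈ P, ∑ e ∈ Finset.range (X+1), ((Real.sqrt p)⁻¹ : ℝ) ^ e ≤ 4 := by
    intro p hp
    have hp2 : 2 ≤ p := (Nat.prime_of_mem_primeFactors hp).two_le
    apply geom4 (by positivity)
    have h2 : (4:ℝ)/3 ≤ Real.sqrt p := by
      calc (4:ℝ)/3 ≤ Real.sqrt 2 := by
            nlinarith [Real.sq_sqrt (by norm_num : (0:ℝ) ≤ 2), Real.sqrt_nonneg 2]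
        _ ≤ Real.sqrt p := Real.sqrt_le_sqrt (by exact_mod_cast hp2)
    rw [inv_le_comm₀ (by nlinarith) (by norm_num)]
    linarith
  calc ∑ u ∈ U, ((Real.sqrt u)⁻¹ : ℝ) = ∑ φ ∈ U.image i, g φ := hsum1
    _ ≤ ∑ φ ∈ Φ, g φ := hsum2
    _ = ∏ p ∈ P, ∑ e ∈ Finset.range (X+1), ((Real.sqrt p)⁻¹) ^ e := hsum3
    _ ≤ ∏ _p ∈ P, (4:ℝ) := Finset.prod_le_prod
        (fun p _ => Finset.sum_nonneg fun e _ => by positivity) hfac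
    _ = 4 ^ P.card := by rw [Finset.prod_const]
lemma prod4 {η : ℝ} (hη : 0 < η) : ∃ Cp : ℝ, 0 < Cp ∧
    ∀ d : ℕ, 0 < d → (4:ℝ) ^ d.primeFactors.card ≤ Cp * (d:ℝ) ^ η := by
  set B := ⌈(4:ℝ) ^ (1/η)⌉₊ with hB
  refine ⟨4 ^ (B + 1), by positivity, ?_⟩
  intro d hd
  set P := d.primeFactors with hP
  set small := P.filter (· ≤ B) with hsmall
  set big := P.filter (fun p => ¬ p ≤ B) with hbig
  have hsplit : (4:ℝ) ^ P.card = (4:ℝ) ^ small.card * (4:ℝ) ^ big.card := by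
    rw [← pow_add, hsmall, hbig, Finset.card_filter_add_card_filter_not]
  have h1 : (4:ℝ) ^ small.card ≤ 4 ^ (B + 1) := by
    apply pow_le_pow_right₀ (by norm_num)
    have : small ⊆ Finset.range (B + 1) := by
      intro p hp
      rw [hsmall, Finset.mem_filter] at hp
      exact Finset.mem_range.mpr (by omega)
    calc small.card ≤ (Finset.range (B+1)).card := Finset.card_le_card this
      _ = B + 1 := Finset.card_range _
  have h2 : (4:ℝ) ^ big.card ≤ (d:ℝ) ^ η := by
    have hstep : (4:ℝ) ^ big.card ≤ ∏ p ∈ big, ((p:ℝ)) ^ η := by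
      rw [← Finset.prod_const]
      apply Finset.prod_le_prod (fun _ _ => by norm_num)
      intro p hp
      rw [hbig, Finset.mem_filter] at hp
      have h4 : ((4:ℝ) ^ (1/η)) ≤ (p:ℝ) := by
        have : ((4:ℝ) ^ (1/η)) ≤ B := Nat.le_ceil _
        have hpB : (B:ℝ) ≤ (p:ℝ) := by exact_mod_cast Nat.le_of_lt (by omega)
        linarith
      calc (4:ℝ) = ((4:ℝ) ^ (1/η)) ^ η := by
            rw [← Real.rpow_mul (by norm_num : (0:ℝ) ≤ 4), one_div,
              inv_mul_cancel₀ hη.ne', Real.rpow_one]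
        _ ≤ (p:ℝ) ^ η := Real.rpow_le_rpow (by positivity) h4 hη.le
    refine hstep.trans ?_
    have hprodle : (∏ p ∈ big, (p:ℕ)) ≤ d := by
      apply Nat.le_of_dvd hd
      calc (∏ p ∈ big, (p:ℕ)) ∣ ∏ p ∈ P, p :=
            Finset.prod_dvd_prod_of_subset big P _ (by rw [hbig]; exact Finset.filter_subset _ _)
        _ ∣ d := Nat.prod_primeFactors_dvd d
    calc ∏ p ∈ big, ((p:ℝ)) ^ η = ((∏ p ∈ big, (p:ℕ) : ℕ) : ℝ) ^ η := by
          rw [Real.finset_prod_rpow big _ (fun p _ => by positivity) η,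
            ← Nat.cast_prod]
      _ ≤ (d:ℝ) ^ η := Real.rpow_le_rpow (by positivity) (by exact_mod_cast hprodle) hη.le
  calc (4:ℝ) ^ P.card = (4:ℝ) ^ small.card * (4:ℝ) ^ big.card := hsplit
    _ ≤ 4 ^ (B+1) * (d:ℝ) ^ η := by
        apply mul_le_mul h1 h2 (by positivity) (by positivity)

lemma Tbound (X d₀ : ℕ) (hd : 0 < d₀) :
    (((Icc 1 X).filter (fun n => Squarefull n ∧ d₀ ∣ n)).card : ℝ)
      ≤ 3 * Real.sqrt X * (Real.sqrt d₀)⁻¹ * 4 ^ d₀.primeFactors.card := by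
  classical
  rcases Nat.eq_zero_or_pos X with rfl | hX
  · simp
  set T := (Icc 1 X).filter (fun n => Squarefull n ∧ d₀ ∣ n) with hT
  set f : ℕ → ℕ := fun n => n.gcd (d₀ ^ X) with hf
  set M := (Icc 1 X).filter (fun m => d₀ ∣ m ∧ m ∣ d₀ ^ X) with hM
  have hd0X : d₀ ^ X ≠ 0 := by positivity
  have hmapsto : ∀ n ∈ T, f n ∈ M := by
    intro n hn
    rw [hT, Finset.mem_filter, Finset.mem_Icc] at hn
    obtain ⟨⟨h1, h2⟩, _, hdn⟩ := hn
    have hfn : f n ∣ n := Nat.gcd_dvd_left _ _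
    rw [hM, Finset.mem_filter, Finset.mem_Icc]
    refine ⟨⟨?_, (Nat.le_of_dvd (by omega) hfn).trans h2⟩,
      Nat.dvd_gcd hdn (dvd_pow_self d₀ (by omega)), Nat.gcd_dvd_right _ _⟩
    have : 0 < f n := Nat.gcd_pos_of_pos_left _ (by omega)
    omega
  have hcard : T.card = ∑ m ∈ M, (T.filter (fun n => f n = m)).card :=
    Finset.card_eq_sum_card_fiberwise hmapsto
  have hfiber : ∀ m ∈ M, (T.filter (fun n => f n = m)).card
      ≤ ((Icc 1 (X / m)).filter Squarefull).card := by
    intro m hm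
    rw [hM, Finset.mem_filter, Finset.mem_Icc] at hm
    obtain ⟨⟨hm1, hmX⟩, hd₀m, hmdX⟩ := hm
    apply Finset.card_le_card_of_injOn (fun n => n / m)
    · intro n hn
      rw [Finset.mem_coe, Finset.mem_filter] at hn
      obtain ⟨hnT, hfnm⟩ := hn
      rw [hT, Finset.mem_filter, Finset.mem_Icc] at hnT
      obtain ⟨⟨hn1, hnX⟩, hsf, hdn⟩ := hnT
      have hn0 : n ≠ 0 := by omega
      have hmn : m ∣ n := hfnm ▸ Nat.gcd_dvd_left _ _
      rw [Finset.mem_coe, Finset.mem_filter, Finset.mem_Icc]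
      refine ⟨⟨(Nat.one_le_div_iff (by omega)).mpr (Nat.le_of_dvd (by omega) hmn),
        Nat.div_le_div_right hnX⟩, ?_⟩
      -- squarefull of n / m
      intro p pp hpq
      have hpm : ¬ p ∣ m := by
        intro hpm
        have hpdX : p ∣ d₀ ^ X := hpm.trans hmdX
        have hpd₀ : p ∣ d₀ := pp.dvd_of_dvd_pow hpdX
        have hvm : m.factorization p = n.factorization p := by
          have hgcd := Nat.factorization_gcd hn0 hd0X
          have : m.factorization = n.factorization ⊓ (d₀ ^ X).factorization := by
            rw [← hfnm]; exact hgcd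
          rw [this, Finsupp.inf_apply, Nat.factorization_pow]
          simp only [Finsupp.smul_apply, smul_eq_mul]
          have hv1 : 1 ≤ d₀.factorization p :=
            (pp.dvd_iff_one_le_factorization (by omega)).mp hpd₀
          have hvn : n.factorization p < n := Nat.factorization_lt p hn0
          have : n.factorization p ≤ X * d₀.factorization p := by nlinarith
          omega
        have h1q : 1 ≤ (n / m).factorization p :=
          (pp.dvd_iff_one_le_factorization (by
            have := Nat.div_pos (Nat.le_of_dvd (by omega) hmn) (by omega)
            omega)).mp hpq
        rw [Nat.factorization_div hmn] at h1q
        simp only [Finsupp.tsub_apply] at h1q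
        omega
      have hpn : p ∣ n := hpq.trans (Nat.div_dvd_of_dvd hmn)
      have hp2 : p ^ 2 ∣ n := hsf p pp hpn
      have hcop : Nat.Coprime (p ^ 2) m :=
        Nat.Coprime.pow_left 2 ((pp.coprime_iff_not_dvd).mpr hpm)
      have : p ^ 2 ∣ m * (n / m) := by rwa [Nat.mul_div_cancel' hmn]
      exact hcop.dvd_of_dvd_mul_left this
    · intro n₁ h₁ n₂ h₂ heq
      rw [Finset.mem_coe, Finset.mem_filter] at h₁ h₂
      have hm₁ : m ∣ n₁ := h₁.2 ▸ Nat.gcd_dvd_left _ _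
      have hm₂ : m ∣ n₂ := h₂.2 ▸ Nat.gcd_dvd_left _ _
      have e₁ : n₁ = m * (n₁ / m) := (Nat.mul_div_cancel' hm₁).symm
      have e₂ : n₂ = m * (n₂ / m) := (Nat.mul_div_cancel' hm₂).symm
      rw [e₁, e₂]
      exact congrArg (m * ·) heq
  -- real chain
  have hMsum : ∑ m ∈ M, ((Real.sqrt m)⁻¹ : ℝ) ≤ (Real.sqrt d₀)⁻¹ * 4 ^ d₀.primeFactors.card := by
    have hsplitm : ∀ m ∈ M, ((Real.sqrt m)⁻¹ : ℝ) = (Real.sqrt d₀)⁻¹ * (Real.sqrt (m / d₀ : ℕ))⁻¹ := by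
      intro m hm
      rw [hM, Finset.mem_filter, Finset.mem_Icc] at hm
      obtain ⟨⟨hm1, hmX⟩, hd₀m, hmdX⟩ := hm
      have : (m : ℝ) = (d₀ : ℝ) * ((m / d₀ : ℕ) : ℝ) := by
        rw [← Nat.cast_mul, Nat.mul_div_cancel' hd₀m]
      rw [this, Real.sqrt_mul (by positivity), mul_inv]
    rw [Finset.sum_congr rfl hsplitm, ← Finset.mul_sum]
    apply mul_le_mul_of_nonneg_left ?_ (by positivity)
    have himg : ∑ m ∈ M, ((Real.sqrt (m / d₀ : ℕ))⁻¹ : ℝ)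
        = ∑ u ∈ M.image (· / d₀), ((Real.sqrt u)⁻¹ : ℝ) := by
      rw [Finset.sum_image ?_]
      intro m₁ h₁ m₂ h₂ heq
      rw [hM, Finset.mem_coe, Finset.mem_filter] at h₁ h₂
      have e₁ : m₁ = d₀ * (m₁ / d₀) := (Nat.mul_div_cancel' h₁.2.1).symm
      have e₂ : m₂ = d₀ * (m₂ / d₀) := (Nat.mul_div_cancel' h₂.2.1).symm
      rw [e₁, e₂]
      exact congrArg (d₀ * ·) heq
    rw [himg]
    apply Finset.sum_le_sum_of_subset_of_nonneg ?_ (fun _ _ _ => by positivity) |>.trans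
      (smooth_sum X d₀ hd)
    intro u hu
    obtain ⟨m, hm, rfl⟩ := Finset.mem_image.mp hu
    rw [hM, Finset.mem_filter, Finset.mem_Icc] at hm
    obtain ⟨⟨hm1, hmX⟩, hd₀m, hmdX⟩ := hm
    rw [Finset.mem_filter, Finset.mem_Icc]
    have hdm : d₀ ≤ m := Nat.le_of_dvd (by omega) hd₀m
    refine ⟨⟨(Nat.one_le_div_iff (by omega)).mpr hdm, (Nat.div_le_self _ _).trans hmX⟩, ?_⟩
    exact (Nat.div_dvd_of_dvd hd₀m).trans hmdX
  calc (T.card : ℝ) = ∑ m ∈ M, ((T.filter (fun n => f n = m)).card : ℝ) := by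
        rw [hcard]; push_cast; rfl
    _ ≤ ∑ m ∈ M, (3 * Real.sqrt X * (Real.sqrt m)⁻¹) := by
        apply Finset.sum_le_sum
        intro m hm
        have hm1 : 1 ≤ m := by
          rw [hM, Finset.mem_filter, Finset.mem_Icc] at hm; omega
        calc ((T.filter (fun n => f n = m)).card : ℝ)
            ≤ (((Icc 1 (X / m)).filter Squarefull).card : ℝ) := by
              exact_mod_cast hfiber m hm
          _ ≤ 3 * Real.sqrt (X / m : ℕ) := sf_count _
          _ ≤ 3 * Real.sqrt ((X : ℝ) / m) := by
              apply mul_le_mul_of_nonneg_left (Real.sqrt_le_sqrt Nat.cast_div_le) (by norm_num)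
          _ = 3 * Real.sqrt X * (Real.sqrt m)⁻¹ := by
              rw [Real.sqrt_div (by positivity), div_eq_mul_inv, mul_assoc]
    _ = 3 * Real.sqrt X * ∑ m ∈ M, ((Real.sqrt m)⁻¹ : ℝ) := by rw [← Finset.mul_sum]
    _ ≤ 3 * Real.sqrt X * ((Real.sqrt d₀)⁻¹ * 4 ^ d₀.primeFactors.card) := by
        apply mul_le_mul_of_nonneg_left hMsum (by positivity)
    _ = 3 * Real.sqrt X * (Real.sqrt d₀)⁻¹ * 4 ^ d₀.primeFactors.card := by ring
theorem stmt_8 (η : ℝ) (hη : 0 < η) :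
    ∃ C : ℝ, 0 < C ∧
      ∀ (N S₀ S₁ : ℝ) (d₀ d₁ : ℕ),
        1 ≤ S₀ → 1 ≤ S₁ → S₀ ≤ N → S₁ ≤ N → 0 < d₀ → 0 < d₁ →
        ((((Finset.Icc 1 ⌊2 * S₀⌋₊ ×ˢ Finset.Icc 1 ⌊2 * S₁⌋₊).filter fun p =>
            S₀ < (p.1 : ℝ) ∧ (p.1 : ℝ) ≤ 2 * S₀ ∧ Squarefull p.1 ∧ d₀ ∣ p.1 ∧
            S₁ < (p.2 : ℝ) ∧ (p.2 : ℝ) ≤ 2 * S₁ ∧ Squarefree p.2 ∧ d₁ ∣ p.2 ∧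
            Nat.gcd p.1 p.2 = 1).card : ℝ)
          ≤ C * N ^ η * S₀ ^ ((1 : ℝ) / 2) * S₁ * (d₀ : ℝ) ^ (-(1 : ℝ) / 2) * (d₁ : ℝ)⁻¹) := by
  obtain ⟨Cp, hCp, hprod4⟩ := prod4 hη
  refine ⟨6 * Real.sqrt 2 * Cp * (2:ℝ) ^ η, by positivity, ?_⟩
  intro N S₀ S₁ d₀ d₁ hS₀ hS₁ h₀N h₁N hd₀ hd₁
  have hN1 : (1:ℝ) ≤ N := hS₀.trans h₀N
  set X₀ := ⌊2 * S₀⌋₊ with hX₀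
  set X₁ := ⌊2 * S₁⌋₊ with hX₁
  set A := (Finset.Icc 1 X₀ ×ˢ Finset.Icc 1 X₁).filter fun p =>
      S₀ < (p.1 : ℝ) ∧ (p.1 : ℝ) ≤ 2 * S₀ ∧ Squarefull p.1 ∧ d₀ ∣ p.1 ∧
      S₁ < (p.2 : ℝ) ∧ (p.2 : ℝ) ≤ 2 * S₁ ∧ Squarefree p.2 ∧ d₁ ∣ p.2 ∧
      Nat.gcd p.1 p.2 = 1 with hA
  have hRHSrw : (S₀ : ℝ) ^ ((1 : ℝ) / 2) = Real.sqrt S₀ := (Real.sqrt_eq_rpow S₀).symm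
  have hd₀rw : (d₀ : ℝ) ^ (-(1 : ℝ) / 2) = (Real.sqrt d₀)⁻¹ := by
    rw [show (-(1:ℝ)/2) = -(1/2) by norm_num, Real.rpow_neg (by positivity),
      ← Real.sqrt_eq_rpow]
  rcases A.eq_empty_or_nonempty with hAe | hAne
  · rw [hAe]
    simp only [Finset.card_empty, Nat.cast_zero]
    positivity
  obtain ⟨⟨n₀, n₁⟩, hmem⟩ := hAne
  rw [hA, Finset.mem_filter, Finset.mem_product] at hmem
  obtain ⟨⟨hn₀m, hn₁m⟩, _, hle₀, _, hdvd₀, _, _, _, _, _⟩ := hmem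
  have hd₀2N : (d₀ : ℝ) ≤ 2 * N := by
    have h1 : (d₀:ℝ) ≤ (n₀:ℝ) := by
      exact_mod_cast Nat.le_of_dvd (by
        have := (Finset.mem_Icc.mp hn₀m).1; omega) hdvd₀
    linarith
  set F₀ := (Icc 1 X₀).filter (fun n => Squarefull n ∧ d₀ ∣ n) with hF₀
  set F₁ := (Icc 1 X₁).filter (fun k => d₁ ∣ k) with hF₁
  have hsub : A ⊆ F₀ ×ˢ F₁ := by
    intro x hx
    rw [hA, Finset.mem_filter, Finset.mem_product] at hx
    rw [Finset.mem_product, hF₀, hF₁, Finset.mem_filter, Finset.mem_filter]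
    tauto
  have hstep1 : (A.card : ℝ) ≤ (F₀.card : ℝ) * (F₁.card : ℝ) := by
    have := Finset.card_le_card hsub
    rw [Finset.card_product] at this
    exact_mod_cast this
  have hstep2 : (F₁.card : ℝ) ≤ 2 * S₁ / d₁ := by
    have hIoc : Icc 1 X₁ = Ioc 0 X₁ := by ext a; simp [Finset.mem_Icc, Finset.mem_Ioc]; omega
    have hc : F₁.card = X₁ / d₁ := by
      rw [hF₁, hIoc]
      simpa using Nat.Ioc_filter_dvd_card_eq_div X₁ d₁
    rw [hc]
    calc ((X₁ / d₁ : ℕ) : ℝ) ≤ (X₁ : ℝ) / d₁ := Nat.cast_div_le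
      _ ≤ 2 * S₁ / d₁ :=
          div_le_div_of_nonneg_right (Nat.floor_le (by positivity)) (by positivity)
  have hstep3 : (F₀.card : ℝ)
      ≤ 3 * (Real.sqrt 2 * Real.sqrt S₀) * (Real.sqrt d₀)⁻¹ * (Cp * ((2:ℝ) ^ η * N ^ η)) := by
    have e1 : Real.sqrt (X₀:ℝ) ≤ Real.sqrt 2 * Real.sqrt S₀ := by
      rw [← Real.sqrt_mul (by norm_num) S₀]
      exact Real.sqrt_le_sqrt (Nat.floor_le (by positivity))
    have e2 : (d₀:ℝ) ^ η ≤ (2:ℝ) ^ η * N ^ η := by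
      rw [← Real.mul_rpow (by norm_num) (by linarith)]
      exact Real.rpow_le_rpow (by positivity) hd₀2N hη.le
    calc (F₀.card : ℝ) ≤ 3 * Real.sqrt X₀ * (Real.sqrt d₀)⁻¹ * 4 ^ d₀.primeFactors.card :=
          Tbound X₀ d₀ hd₀
      _ ≤ 3 * Real.sqrt X₀ * (Real.sqrt d₀)⁻¹ * (Cp * (d₀:ℝ) ^ η) := by
          apply mul_le_mul_of_nonneg_left (hprod4 d₀ hd₀) (by positivity)
      _ ≤ 3 * (Real.sqrt 2 * Real.sqrt S₀) * (Real.sqrt d₀)⁻¹ * (Cp * ((2:ℝ) ^ η * N ^ η)) := by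
          gcongr
  rw [hRHSrw, hd₀rw]
  calc ((A.card : ℕ) : ℝ) ≤ (F₀.card : ℝ) * (F₁.card : ℝ) := hstep1
    _ ≤ (3 * (Real.sqrt 2 * Real.sqrt S₀) * (Real.sqrt d₀)⁻¹ * (Cp * ((2:ℝ) ^ η * N ^ η)))
        * (2 * S₁ / d₁) := mul_le_mul hstep3 hstep2 (by positivity) (by positivity)
    _ = 6 * Real.sqrt 2 * Cp * (2:ℝ) ^ η * N ^ η * Real.sqrt S₀ * S₁ * (Real.sqrt d₀)⁻¹
        * (d₁:ℝ)⁻¹ := by ring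
end

section
/- Let q ≥ 2, W, X, Y positive integers greater than 1, and a an integer coprime to q. Then the number of pairs (y₁, y₂) with y₁ ≠ y₂, Y ≤ y₁, y₂ < 2Y, such that min over s ≤ W of ‖a·(y₁² − y₂²)·s/q‖ < 1/X, is ≪ (W·Y²/q + 1)·(1 + q/X)·(W·Y)^η for every η > 0. -/
open Finset
open scoped Classical

/-- Distance from a real number to the nearest integer. -/
noncomputable def ndist (x : ℝ) : ℝ := |x - round x|

lemma divisor_bound (ε : ℝ) (hε : 0 < ε) :
    ∃ C : ℝ, 1 ≤ C ∧ ∀ n : ℕ, n ≠ 0 → (n.divisors.card : ℝ) ≤ C * (n : ℝ) ^ ε := by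
  have hlog2 : (0:ℝ) < Real.log 2 := Real.log_pos (by norm_num)
  set K : ℝ := 1 + 1 / (ε * Real.log 2) with hK
  have hK1 : 1 ≤ K := le_add_of_nonneg_right (by positivity)
  set B : ℕ := ⌈(2:ℝ) ^ (1/ε)⌉₊ with hB
  refine ⟨K ^ (B + 1), one_le_pow₀ hK1, fun n hn => ?_⟩
  -- pointwise bound per prime
  have key : ∀ p ∈ n.primeFactors,
      ((n.factorization p + 1 : ℕ) : ℝ) ≤
        (if p ≤ B then K else 1) * (((p : ℝ) ^ n.factorization p) ^ ε) := by
    intro p hp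
    have hpp : p.Prime := Nat.prime_of_mem_primeFactors hp
    have ha1 : 1 ≤ n.factorization p := (Nat.Prime.factorization_pos_of_dvd hpp hn
      (Nat.dvd_of_mem_primeFactors hp))
    set a := n.factorization p with haa
    have hp2 : (2:ℝ) ≤ (p:ℝ) := by exact_mod_cast hpp.two_le
    have hppos : (0:ℝ) < (p:ℝ) := by linarith
    have hpow : ((p : ℝ) ^ a) ^ ε = ((p:ℝ) ^ ε) ^ a := by
      rw [← Real.rpow_natCast ((p:ℝ)^ε) a, ← Real.rpow_natCast (p:ℝ) a,
        ← Real.rpow_mul hppos.le, ← Real.rpow_mul hppos.le, mul_comm]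
    by_cases hcase : p ≤ B
    · simp only [hcase, if_true]
      -- (a+1) ≤ K * (2^ε)^a ≤ K * (p^ε)^a
      have h2e : Real.exp (ε * Real.log 2) = (2:ℝ) ^ ε := by
        rw [Real.rpow_def_of_pos (by norm_num), mul_comm]
      have hexp : 1 + (a:ℝ) * (ε * Real.log 2) ≤ ((2:ℝ) ^ ε) ^ a := by
        have h1 : ((2:ℝ) ^ ε) ^ a = Real.exp ((a:ℝ) * (ε * Real.log 2)) := by
          rw [← h2e, ← Real.exp_nat_mul]
        rw [h1]
        have := Real.add_one_le_exp ((a:ℝ) * (ε * Real.log 2))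
        linarith
      have hKa : ((a:ℝ) + 1) ≤ K * (1 + (a:ℝ) * (ε * Real.log 2)) := by
        rw [hK]
        have h0 : (0:ℝ) < ε * Real.log 2 := by positivity
        have hinv : 1 / (ε * Real.log 2) * ((a:ℝ) * (ε * Real.log 2)) = (a:ℝ) := by
          field_simp
        have ha0 : (0:ℝ) ≤ (a:ℝ) := Nat.cast_nonneg a
        have hexpand : (1 + 1/(ε*Real.log 2)) * (1 + (a:ℝ)*(ε*Real.log 2))
            = 1 + (a:ℝ)*(ε*Real.log 2) + 1/(ε*Real.log 2) + (a:ℝ) := by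
          field_simp; ring
        have hx : (0:ℝ) ≤ (a:ℝ)*(ε*Real.log 2) := mul_nonneg ha0 h0.le
        have hi : (0:ℝ) ≤ 1/(ε*Real.log 2) := by positivity
        rw [hexpand]; linarith
      have hmono : ((2:ℝ) ^ ε) ^ a ≤ ((p:ℝ) ^ ε) ^ a :=
        pow_le_pow_left₀ (by positivity) (Real.rpow_le_rpow (by norm_num) hp2 hε.le) a
      have hKpos : (0:ℝ) < K := lt_of_lt_of_le one_pos hK1
      push_cast
      calc ((a:ℝ) + 1) ≤ K * (1 + (a:ℝ) * (ε * Real.log 2)) := hKa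
        _ ≤ K * ((2:ℝ) ^ ε) ^ a := by nlinarith
        _ ≤ K * ((p:ℝ) ^ ε) ^ a := by nlinarith
        _ = K * (((p:ℝ) ^ a) ^ ε) := by rw [hpow]
    · simp only [hcase, if_false, one_mul]
      -- p > B so p^ε ≥ 2, then (p^ε)^a ≥ 2^a ≥ a+1
      have hpB : ((2:ℝ) ^ (1/ε)) ≤ (p:ℝ) := by
        have : (2:ℝ) ^ (1/ε) ≤ (B:ℝ) := Nat.le_ceil _
        have hBp : (B:ℝ) ≤ (p:ℝ) := by exact_mod_cast (le_of_lt (not_le.mp hcase))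
        linarith
      have h2 : (2:ℝ) ≤ (p:ℝ) ^ ε := by
        have := Real.rpow_le_rpow (by positivity) hpB hε.le
        rwa [← Real.rpow_mul (by norm_num : (0:ℝ) ≤ 2), one_div_mul_cancel hε.ne',
          Real.rpow_one] at this
      have h2a : ((a:ℝ) + 1) ≤ (2:ℝ) ^ a := by
        exact_mod_cast Nat.succ_le_of_lt (Nat.lt_two_pow_self (n := a))
      have : ((2:ℝ)) ^ a ≤ ((p:ℝ) ^ ε) ^ a := pow_le_pow_left₀ (by norm_num) h2 a
      push_cast
      rw [hpow]
      linarith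
  calc (n.divisors.card : ℝ)
      = ∏ p ∈ n.primeFactors, ((n.factorization p + 1 : ℕ) : ℝ) := by
        rw [Nat.card_divisors hn]; push_cast; rfl
    _ ≤ ∏ p ∈ n.primeFactors, (if p ≤ B then K else 1) * (((p : ℝ) ^ n.factorization p) ^ ε) := by
        apply Finset.prod_le_prod (fun p _ => by positivity) key
    _ = (∏ p ∈ n.primeFactors, (if p ≤ B then K else 1)) *
          ∏ p ∈ n.primeFactors, (((p : ℝ) ^ n.factorization p) ^ ε) := Finset.prod_mul_distrib
    _ ≤ K ^ (B + 1) * (n:ℝ) ^ ε := by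
        have h1 : (∏ p ∈ n.primeFactors, (if p ≤ B then K else 1)) ≤ K ^ (B+1) := by
          rw [← Finset.prod_filter]
          rw [Finset.prod_const]
          apply pow_le_pow_right₀ hK1
          calc (n.primeFactors.filter (· ≤ B)).card ≤ (Finset.range (B+1)).card := by
                apply Finset.card_le_card
                intro p hp
                simp only [Finset.mem_filter] at hp
                simp [Nat.lt_succ_of_le hp.2]
            _ = B + 1 := Finset.card_range _
        have h2 : ∏ p ∈ n.primeFactors, (((p : ℝ) ^ n.factorization p) ^ ε) = (n:ℝ) ^ ε := by
          rw [Real.finset_prod_rpow _ _ (fun p _ => by positivity)]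
          congr 1
          have : n.primeFactors.prod (fun p => p ^ n.factorization p) = n := by
            conv_rhs => rw [← Nat.factorization_prod_pow_eq_self hn]
            rw [Nat.prod_factorization_eq_prod_primeFactors]
          exact_mod_cast congrArg (Nat.cast : ℕ → ℝ) this
        rw [h2]
        have : (0:ℝ) ≤ (n:ℝ) ^ ε := by positivity
        nlinarith

set_option maxHeartbeats 2000000 in
theorem stmt_18 (η : ℝ) (hη : 0 < η) :
    ∃ C : ℝ, 0 < C ∧
      ∀ (q W X Y : ℕ) (a : ℤ), 2 ≤ q → 1 < W → 1 < X → 1 < Y →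
        IsCoprime a (q : ℤ) →
        ((((Finset.Ico Y (2 * Y) ×ˢ Finset.Ico Y (2 * Y)).filter fun p =>
            p.1 ≠ p.2 ∧ ∃ s : ℕ, 1 ≤ s ∧ s ≤ W ∧
              ndist ((a : ℝ) * ((p.1 : ℝ) ^ 2 - (p.2 : ℝ) ^ 2) * s / q) < 1 / X).card : ℝ)
          ≤ C * ((W : ℝ) * Y ^ 2 / q + 1) * (1 + (q : ℝ) / X) * ((W : ℝ) * Y) ^ η) := by
  obtain ⟨Cd, hCd1, hCd⟩ := divisor_bound (η / 6) (by positivity)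
  refine ⟨32 * Cd ^ 2, by positivity, ?_⟩
  intro q W X Y a hq hW hX hY hco
  have hq0 : (0:ℤ) < (q:ℤ) := by exact_mod_cast lt_of_lt_of_le two_pos hq
  have hqR : (0:ℝ) < (q:ℝ) := by exact_mod_cast hq0
  have hXR : (0:ℝ) < (X:ℝ) := by exact_mod_cast lt_trans one_pos hX
  have hY2 : 2 ≤ Y := hY
  have hW2 : 2 ≤ W := hW
  have hYR : (2:ℝ) ≤ (Y:ℝ) := by exact_mod_cast hY2
  have hWR : (2:ℝ) ≤ (W:ℝ) := by exact_mod_cast hW2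
  set P : ℕ × ℕ → Prop := fun p => ∃ s : ℕ, 1 ≤ s ∧ s ≤ W ∧
      ndist ((a : ℝ) * ((p.1 : ℝ) ^ 2 - (p.2 : ℝ) ^ 2) * s / q) < 1 / X with hP
  set S : Finset (ℕ × ℕ) := (Finset.Ico Y (2 * Y) ×ˢ Finset.Ico Y (2 * Y)).filter
      (fun p => p.1 ≠ p.2 ∧ P p) with hS
  set sel : ℕ × ℕ → ℕ := fun p => if h : P p then h.choose else 1 with hsel
  set tt : ℕ × ℕ → ℤ := fun p => ((p.1 : ℤ) ^ 2 - (p.2 : ℤ) ^ 2) * sel p with htt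
  set M : ℤ := 4 * W * (Y:ℤ) ^ 2 with hM
  have hM0 : (0:ℤ) < M := by positivity
  have hMR : (0:ℝ) < (M:ℝ) := by exact_mod_cast hM0
  set F : ℕ × ℕ → ℤ × ℤ := fun p =>
    (a * tt p - q * round (((a * tt p : ℤ) : ℝ) / q), (tt p + M) / q) with hF
  set R : ℤ := ((q / X : ℕ) : ℤ) with hR
  set Kk : ℤ := (2 * M) / q with hKk
  set T : Finset (ℤ × ℤ) := Finset.Icc (-R) R ×ˢ Finset.Icc 0 Kk with hT
  -- basic facts about members of S
  have hSmem : ∀ p ∈ S, p.1 ≠ p.2 ∧ Y ≤ p.1 ∧ p.1 < 2 * Y ∧ Y ≤ p.2 ∧ p.2 < 2 * Y ∧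
      1 ≤ sel p ∧ sel p ≤ W ∧ ndist (((a * tt p : ℤ) : ℝ) / q) < 1 / X := by
    intro p hp
    rw [hS, Finset.mem_filter, Finset.mem_product, Finset.mem_Ico, Finset.mem_Ico] at hp
    obtain ⟨⟨⟨h1, h2⟩, h3, h4⟩, hne, hPp⟩ := hp
    have hsp : 1 ≤ sel p ∧ sel p ≤ W ∧
        ndist ((a : ℝ) * ((p.1 : ℝ) ^ 2 - (p.2 : ℝ) ^ 2) * (sel p) / q) < 1 / X := by
      rw [hsel]; simp only [hPp, dif_pos]
      exact hPp.choose_spec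
    refine ⟨hne, h1, h2, h3, h4, hsp.1, hsp.2.1, ?_⟩
    have hcast : ((a * tt p : ℤ) : ℝ) / q
        = (a : ℝ) * ((p.1 : ℝ) ^ 2 - (p.2 : ℝ) ^ 2) * (sel p) / q := by
      rw [htt]; push_cast; ring
    rw [hcast]; exact hsp.2.2
  have hn_ne : ∀ p ∈ S, ((p.1 : ℤ) ^ 2 - (p.2 : ℤ) ^ 2) ≠ 0 := by
    intro p hp h
    obtain ⟨hne, -⟩ := hSmem p hp
    apply hne
    have h2 : (p.1 : ℤ) ^ 2 = (p.2 : ℤ) ^ 2 := by linarith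
    have h3 : p.1 ^ 2 = p.2 ^ 2 := by exact_mod_cast h2
    exact Nat.pow_left_injective (by norm_num) h3
  have hsel_ne : ∀ p ∈ S, ((sel p : ℤ)) ≠ 0 := by
    intro p hp
    have := (hSmem p hp).2.2.2.2.2.1
    positivity
  have ht_ne : ∀ p ∈ S, tt p ≠ 0 := by
    intro p hp
    exact mul_ne_zero (hn_ne p hp) (hsel_ne p hp)
  have ht_abs : ∀ p ∈ S, |tt p| ≤ M := by
    intro p hp
    obtain ⟨-, h1, h2, h3, h4, h5, h6, -⟩ := hSmem p hp
    have hx : (p.1 : ℤ) < 2 * Y := by exact_mod_cast h2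
    have hy : (p.2 : ℤ) < 2 * Y := by exact_mod_cast h4
    have hx0 : (0:ℤ) ≤ (p.1 : ℤ) := Int.natCast_nonneg _
    have hy0 : (0:ℤ) ≤ (p.2 : ℤ) := Int.natCast_nonneg _
    have hnabs : |(p.1 : ℤ) ^ 2 - (p.2 : ℤ) ^ 2| ≤ 4 * (Y:ℤ) ^ 2 := by
      rw [abs_le]; constructor <;> nlinarith
    have hsabs : |(sel p : ℤ)| ≤ (W : ℤ) := by
      rw [abs_of_nonneg (Int.natCast_nonneg _)]; exact_mod_cast h6
    rw [htt]
    calc |((p.1 : ℤ) ^ 2 - (p.2 : ℤ) ^ 2) * sel p|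
        = |(p.1 : ℤ) ^ 2 - (p.2 : ℤ) ^ 2| * |(sel p : ℤ)| := abs_mul _ _
      _ ≤ (4 * (Y:ℤ) ^ 2) * W := by
          apply mul_le_mul hnabs hsabs (abs_nonneg _) (by positivity)
      _ = M := by rw [hM]; ring
  -- maps to T
  have hmaps : ∀ p ∈ S, F p ∈ T := by
    intro p hp
    obtain ⟨-, -, -, -, -, -, -, hnd⟩ := hSmem p hp
    rw [hT, Finset.mem_product, Finset.mem_Icc, Finset.mem_Icc]
    constructor
    · -- first coordinate
      set x : ℝ := ((a * tt p : ℤ) : ℝ) / q with hx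
      set r : ℤ := a * tt p - q * round x with hrdef
      have hrR : (r : ℝ) = q * (x - round x) := by
        rw [hrdef, hx]; push_cast; field_simp
      have habs : |(r : ℝ)| < (q:ℝ) / X := by
        rw [hrR, abs_mul, abs_of_pos hqR]
        calc (q:ℝ) * |x - round x| < (q:ℝ) * (1 / X) := by
              apply mul_lt_mul_of_pos_left _ hqR
              exact hnd
          _ = (q:ℝ) / X := by ring
      have hnatAbs : r.natAbs ≤ q / X := by
        have h1 : (r.natAbs : ℝ) ≤ (q:ℝ) / X := by
          rw [Nat.cast_natAbs]
          push_cast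
          exact le_of_lt habs
        have h2 : r.natAbs ≤ ⌊(q:ℝ) / X⌋₊ := Nat.le_floor h1
        rwa [Nat.floor_div_natCast, Nat.floor_natCast] at h2
      have : |r| ≤ R := by
        rw [hR, Int.abs_eq_natAbs]
        exact_mod_cast hnatAbs
      exact abs_le.mp this
    · -- second coordinate
      have h1 : |tt p| ≤ M := ht_abs p hp
      rw [abs_le] at h1
      constructor
      · exact Int.ediv_nonneg (by linarith) (le_of_lt hq0)
      · rw [hKk]
        exact Int.ediv_le_ediv hq0 (by linarith)
  -- fiberwise count
  have hcardsum : S.card = ∑ b ∈ T, (S.filter fun p => F p = b).card :=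
    Finset.card_eq_sum_card_fiberwise hmaps
  set Dr : ℝ := Cd * (M : ℝ) ^ (η / 6) with hDr
  have hDr0 : 0 < Dr := by positivity
  have hfiber : ∀ b ∈ T, ((S.filter fun p => F p = b).card : ℝ) ≤ 2 * Dr ^ 2 := by
    intro b hb
    rcases (S.filter fun p => F p = b).eq_empty_or_nonempty with he | ⟨p₀, hp₀⟩
    · rw [he]; simp; positivity
    have hp₀S : p₀ ∈ S := Finset.mem_of_mem_filter _ hp₀
    have hp₀F : F p₀ = b := (Finset.mem_filter.mp hp₀).2
    set t₀ : ℤ := tt p₀ with ht₀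
    have ht₀ne : t₀ ≠ 0 := ht_ne p₀ hp₀S
    have ht₀abs : |t₀| ≤ M := ht_abs p₀ hp₀S
    have ht₀na : t₀.natAbs ≠ 0 := fun h => ht₀ne (Int.natAbs_eq_zero.mp h)
    -- all members of the fiber have the same tt value
    have hsame : ∀ p ∈ (S.filter fun p => F p = b), tt p = t₀ := by
      intro p hp
      have hpS : p ∈ S := Finset.mem_of_mem_filter _ hp
      have hpF : F p = b := (Finset.mem_filter.mp hp).2
      have hFF : F p = F p₀ := by rw [hpF, hp₀F]
      have h1 : a * tt p - q * round (((a * tt p : ℤ) : ℝ) / q)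
          = a * t₀ - q * round (((a * t₀ : ℤ) : ℝ) / q) := congrArg Prod.fst hFF
      have h2 : (tt p + M) / q = (t₀ + M) / q := congrArg Prod.snd hFF
      have hdvd : (q:ℤ) ∣ (tt p - t₀) := by
        have : a * (tt p - t₀) = q * (round (((a * tt p : ℤ) : ℝ) / q)
            - round (((a * t₀ : ℤ) : ℝ) / q)) := by linarith
        exact (hco.symm).dvd_of_dvd_mul_left ⟨_, this⟩
      have e1 := Int.mul_ediv_add_emod (tt p + M) q
      have e2 := Int.mul_ediv_add_emod (t₀ + M) q
      have m1 : 0 ≤ (tt p + M) % q := Int.emod_nonneg _ hq0.ne'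
      have m2 : (tt p + M) % q < q := Int.emod_lt_of_pos _ hq0
      have m3 : 0 ≤ (t₀ + M) % q := Int.emod_nonneg _ hq0.ne'
      have m4 : (t₀ + M) % q < q := Int.emod_lt_of_pos _ hq0
      have hlt : |tt p - t₀| < q := by
        rw [abs_lt]
        constructor <;> nlinarith [h2, e1, e2]
      have := Int.eq_zero_of_abs_lt_dvd hdvd hlt
      linarith
    -- inject the fiber into divisors × signed divisors
    set Dv : Finset ℤ := (t₀.natAbs.divisors.image (fun d : ℕ => (d:ℤ))) ∪
        (t₀.natAbs.divisors.image (fun d : ℕ => -(d:ℤ))) with hDv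
    have hinj : ((S.filter fun p => F p = b)).card ≤
        (t₀.natAbs.divisors ×ˢ Dv).card := by
      apply Finset.card_le_card_of_injOn (fun p => (sel p, (p.1:ℤ) - p.2))
      · intro p hp
        have hpS : p ∈ S := Finset.mem_of_mem_filter _ hp
        have hpt : tt p = t₀ := hsame p hp
        simp only [Finset.mem_coe]
        rw [Finset.mem_product]
        constructor
        · rw [Nat.mem_divisors]
          refine ⟨?_, ht₀na⟩
          rw [← Int.natCast_dvd]
          exact ⟨(p.1:ℤ)^2 - (p.2:ℤ)^2, by rw [← hpt, htt]; ring⟩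
        · have hvdvd : ((p.1:ℤ) - p.2) ∣ t₀ := by
            refine ⟨((p.1:ℤ) + p.2) * sel p, ?_⟩
            rw [← hpt, htt]; ring
          have hna : ((p.1:ℤ) - p.2).natAbs ∣ t₀.natAbs := Int.natAbs_dvd_natAbs.mpr hvdvd
          rw [hDv, Finset.mem_union]
          rcases Int.natAbs_eq ((p.1:ℤ) - p.2) with hv | hv
          · left
            simp only [Finset.mem_image, Nat.mem_divisors]
            exact ⟨_, ⟨hna, ht₀na⟩, hv.symm⟩
          · right
            simp only [Finset.mem_image, Nat.mem_divisors]
            exact ⟨_, ⟨hna, ht₀na⟩, hv.symm⟩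
      · intro p hp p' hp' hG
        simp only [Prod.mk.injEq] at hG
        obtain ⟨hGs, hGv⟩ := hG
        have hpS : p ∈ S := Finset.mem_of_mem_filter _ hp
        have hp'S : p' ∈ S := Finset.mem_of_mem_filter _ hp'
        have hpt : tt p = tt p' := by rw [hsame p hp, hsame p' hp']
        have hsne : ((sel p : ℤ)) ≠ 0 := hsel_ne p hpS
        have hnn : (p.1:ℤ)^2 - (p.2:ℤ)^2 = (p'.1:ℤ)^2 - (p'.2:ℤ)^2 := by
          rw [htt] at hpt
          simp only at hpt
          rw [hGs] at hpt
          exact mul_right_cancel₀ (by rw [← hGs]; exact hsne) hpt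
        have hvne : ((p.1:ℤ) - p.2) ≠ 0 := by
          intro h
          apply (hSmem p hpS).1
          have : (p.1:ℤ) = p.2 := by linarith
          exact_mod_cast this
        have huu : (p.1:ℤ) + p.2 = (p'.1:ℤ) + p'.2 := by
          have e1 : ((p.1:ℤ) - p.2) * ((p.1:ℤ) + p.2)
              = ((p'.1:ℤ) - p'.2) * ((p'.1:ℤ) + p'.2) := by ring_nf; linarith [hnn]
          rw [← hGv] at e1
          exact mul_left_cancel₀ hvne e1
        have h1 : (p.1:ℤ) = p'.1 := by linarith [hGv, huu]
        have h2 : (p.2:ℤ) = p'.2 := by linarith [hGv, huu]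
        exact Prod.ext (by exact_mod_cast h1) (by exact_mod_cast h2)
    -- bound the target's cardinality
    have hd : (t₀.natAbs.divisors.card : ℝ) ≤ Dr := by
      have h1 := hCd t₀.natAbs ht₀na
      have h2 : ((t₀.natAbs : ℕ) : ℝ) ≤ (M : ℝ) := by
        rw [Nat.cast_natAbs]
        exact Int.cast_le.mpr ht₀abs
      calc (t₀.natAbs.divisors.card : ℝ) ≤ Cd * (t₀.natAbs : ℝ) ^ (η/6) := h1
        _ ≤ Cd * (M : ℝ) ^ (η/6) := by
            apply mul_le_mul_of_nonneg_left _ (by linarith)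
            exact Real.rpow_le_rpow (Nat.cast_nonneg _) h2 (by positivity)
        _ = Dr := rfl
    have hDvcard : (Dv.card : ℝ) ≤ 2 * Dr := by
      have h1 : Dv.card ≤ t₀.natAbs.divisors.card + t₀.natAbs.divisors.card :=
        le_trans (Finset.card_union_le _ _)
          (add_le_add Finset.card_image_le Finset.card_image_le)
      calc (Dv.card : ℝ) ≤ (t₀.natAbs.divisors.card : ℝ) + t₀.natAbs.divisors.card := by
            exact_mod_cast h1
        _ ≤ 2 * Dr := by linarith
    calc ((S.filter fun p => F p = b).card : ℝ)
        ≤ ((t₀.natAbs.divisors ×ˢ Dv).card : ℝ) := by exact_mod_cast hinj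
      _ = (t₀.natAbs.divisors.card : ℝ) * Dv.card := by
          rw [Finset.card_product]; push_cast; ring
      _ ≤ Dr * (2 * Dr) := by
          apply mul_le_mul hd hDvcard (Nat.cast_nonneg _) (le_of_lt hDr0)
      _ = 2 * Dr ^ 2 := by ring
  -- sum up
  have hsum : (S.card : ℝ) ≤ (T.card : ℝ) * (2 * Dr ^ 2) := by
    rw [hcardsum]
    push_cast
    calc ∑ b ∈ T, ((S.filter fun p => F p = b).card : ℝ)
        ≤ ∑ _b ∈ T, (2 * Dr ^ 2) := Finset.sum_le_sum hfiber
      _ = (T.card : ℝ) * (2 * Dr ^ 2) := by rw [Finset.sum_const, nsmul_eq_mul]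
  -- bound T.card
  have hR0 : (0:ℤ) ≤ R := Int.natCast_nonneg _
  have hKk0 : (0:ℤ) ≤ Kk := Int.ediv_nonneg (by linarith) (le_of_lt hq0)
  have hcz1 : ((Finset.Icc (-R) R).card : ℤ) = 2*R + 1 := by
    rw [Int.card_Icc]
    have h0 : (0:ℤ) ≤ R + 1 - -R := by linarith
    rw [Int.toNat_of_nonneg h0]
    ring
  have hc1 : ((Finset.Icc (-R) R).card : ℝ) ≤ 2 * (q:ℝ) / X + 1 := by
    have h3 : ((q / X : ℕ) : ℝ) ≤ (q:ℝ)/X := Nat.cast_div_le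
    have hcr : ((Finset.Icc (-R) R).card : ℝ) = 2*((R:ℤ):ℝ)+1 := by
      exact_mod_cast congrArg ((Int.cast : ℤ → ℝ)) hcz1
    have hRR : ((R:ℤ):ℝ) = ((q / X : ℕ) : ℝ) := by rw [hR]; norm_cast
    rw [hcr, hRR]
    have e1 : 2*(q:ℝ)/X = 2*((q:ℝ)/X) := by ring
    linarith [e1]
  have hcz2 : ((Finset.Icc (0:ℤ) Kk).card : ℤ) = Kk + 1 := by
    rw [Int.card_Icc, sub_zero, Int.toNat_of_nonneg (by linarith)]
  have hc2 : ((Finset.Icc (0:ℤ) Kk).card : ℝ) ≤ 2 * (M:ℝ) / q + 1 := by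
    have e1 := Int.mul_ediv_add_emod (2*M) q
    have m1 : 0 ≤ (2*M) % q := Int.emod_nonneg _ hq0.ne'
    have h3 : (q:ℤ) * Kk ≤ 2*M := by rw [hKk]; linarith
    have h3R : (q:ℝ) * ((Kk:ℤ):ℝ) ≤ 2*(M:ℝ) := by exact_mod_cast h3
    have h4 : ((Kk:ℤ):ℝ) ≤ 2 * (M:ℝ) / q := by
      rw [le_div_iff₀ hqR]; linarith
    have hcr : ((Finset.Icc (0:ℤ) Kk).card : ℝ) = ((Kk:ℤ):ℝ) + 1 := by
      exact_mod_cast congrArg ((Int.cast : ℤ → ℝ)) hcz2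
    rw [hcr]
    linarith
  have hTcard : ((T.card : ℕ) : ℝ) ≤ (2 * (q:ℝ) / X + 1) * (2 * (M:ℝ) / q + 1) := by
    rw [hT, Finset.card_product]
    push_cast
    apply mul_le_mul hc1 hc2 (Nat.cast_nonneg _) (by positivity)
  -- final power computation
  have hpow : (M:ℝ) ^ (η/6) * (M:ℝ) ^ (η/6) ≤ ((W:ℝ) * Y) ^ η := by
    rw [← Real.rpow_add hMR]
    have h1 : (M:ℝ) ≤ ((W:ℝ) * Y) ^ (3:ℕ) := by
      rw [hM]; push_cast
      have hW0 : (0:ℝ) < (W:ℝ) := by linarith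
      have hY0 : (0:ℝ) < (Y:ℝ) := by linarith
      have h4 : (4:ℝ) ≤ (W:ℝ)^2 * Y := by nlinarith
      nlinarith [mul_nonneg (mul_nonneg hW0.le (pow_nonneg hY0.le 2)) (sub_nonneg.mpr h4)]
    have h2 : η/6 + η/6 = η/3 := by ring
    rw [h2]
    calc (M:ℝ) ^ (η/3) ≤ (((W:ℝ) * Y) ^ (3:ℕ)) ^ (η/3) := by
          apply Real.rpow_le_rpow (le_of_lt hMR) h1 (by positivity)
      _ = ((W:ℝ) * Y) ^ η := by
          rw [← Real.rpow_natCast ((W:ℝ)*Y) 3, ← Real.rpow_mul (by positivity)]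
          congr 1
          push_cast
          ring
  -- assemble
  have hWY0 : (0:ℝ) < ((W:ℝ)*Y)^η := by positivity
  have hA : 2 * (M:ℝ) / q + 1 ≤ 8 * ((W:ℝ) * Y^2 / q + 1) := by
    have hMval : (M:ℝ) = 4 * (W:ℝ) * (Y:ℝ)^2 := by rw [hM]; push_cast; ring
    have h0 : (0:ℝ) ≤ (W:ℝ) * Y^2 / q := by positivity
    have e : 2 * (4 * (W:ℝ) * (Y:ℝ)^2) / q = 8 * ((W:ℝ) * (Y:ℝ)^2 / q) := by ring
    rw [hMval]
    linarith [e]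
  have hB : 2 * (q:ℝ) / X + 1 ≤ 2 * (1 + (q:ℝ)/X) := by
    have h0 : (0:ℝ) ≤ (q:ℝ)/X := by positivity
    have e1 : 2*(q:ℝ)/X = 2*((q:ℝ)/X) := by ring
    linarith [e1, h0]
  have hDrbound : 2 * Dr ^ 2 ≤ 2 * Cd^2 * ((W:ℝ)*Y)^η := by
    rw [hDr]
    have : (Cd * (M:ℝ)^(η/6))^2 = Cd^2 * ((M:ℝ)^(η/6) * (M:ℝ)^(η/6)) := by ring
    rw [this]
    have hCd0 : (0:ℝ) < Cd := lt_of_lt_of_le one_pos hCd1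
    nlinarith [hpow, Real.rpow_nonneg (le_of_lt hMR) (η/6)]
  calc (S.card : ℝ) ≤ (T.card : ℝ) * (2 * Dr ^ 2) := hsum
    _ ≤ ((2 * (q:ℝ) / X + 1) * (2 * (M:ℝ) / q + 1)) * (2 * Dr ^ 2) := by
        apply mul_le_mul_of_nonneg_right hTcard (by positivity)
    _ ≤ ((2 * (1 + (q:ℝ)/X)) * (8 * ((W:ℝ) * Y^2 / q + 1))) * (2 * Cd^2 * ((W:ℝ)*Y)^η) := by
        apply mul_le_mul _ hDrbound (by positivity) (by positivity)
        apply mul_le_mul hB hA (by positivity) (by positivity)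
    _ = 32 * Cd ^ 2 * ((W : ℝ) * Y ^ 2 / q + 1) * (1 + (q : ℝ) / X) * ((W : ℝ) * Y) ^ η := by
        ring
end
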